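/- Let ℬ be the set of absolutely continuous u : [0,1] → ℝ with u(0) = 0, u(1) = 1, and define J[u] = ∫₀¹ (x − u(x)³)² u'(x)⁶ dx and T[u] = ∫₀¹ u'(x)² dx. Then every u ∈ ℬ with T[u] < ∞ satisfies J[u] ≥ (1/2)(7/8)²(3/10)⁵. In particular inf over ℬ ∩ {T < ∞} of (J + ε²T) is bounded below by (1/2)(7/8)²(3/10)⁵ for every ε > 0. -/

import Mathlib

open MeasureTheory
open Set Filter Topology
open scoped ENNReal

lemma mania_cs_aux {f : ℝ → ℝ} {t : ℝ} (ht : 0 < t)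
    (hf : IntervalIntegrable f volume 0 t)
    (hf2 : IntervalIntegrable (fun x => f x ^ 2) volume 0 t) :
    (∫ x in (0:ℝ)..t, f x) ^ 2 ≤ t * ∫ x in (0:ℝ)..t, f x ^ 2 := by
  set μ := volume.restrict (Ioc (0:ℝ) t) with hμ
  haveI : IsFiniteMeasure μ := ⟨by
    rw [hμ, Measure.restrict_apply_univ, Real.volume_Ioc]
    exact ENNReal.ofReal_lt_top⟩
  have hfm : AEStronglyMeasurable f μ := hf.1.aestronglyMeasurable
  have hfma : AEStronglyMeasurable (fun x => |f x|) μ := by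
    simpa [Real.norm_eq_abs] using hfm.norm
  have h2 : Integrable (fun x => f x ^ 2) μ := hf2.1
  have hmem : MemLp (fun x => |f x|) (ENNReal.ofReal 2) μ := by
    rw [show ENNReal.ofReal 2 = 2 by norm_num]
    rw [memLp_two_iff_integrable_sq hfma]
    simpa [sq_abs] using h2
  have hone : MemLp (fun _ : ℝ => (1:ℝ)) (ENNReal.ofReal 2) μ := memLp_const 1
  have hpq : Real.HolderConjugate 2 2 := Real.holderConjugate_iff.mpr ⟨one_lt_two, by norm_num⟩
  have H := integral_mul_le_Lp_mul_Lq_of_nonneg hpq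
    (ae_of_all μ fun x => abs_nonneg (f x)) (ae_of_all μ fun _ => zero_le_one) hmem hone
  simp only [mul_one] at H
  have e1 : ∫ x, |f x| ^ (2:ℝ) ∂μ = ∫ x, f x ^ 2 ∂μ := by
    refine integral_congr_ae (ae_of_all μ fun x => ?_)
    simp only [Real.rpow_two, sq_abs]
  have e2 : ∫ x, (1:ℝ) ^ (2:ℝ) ∂μ = t := by
    simp [hμ, Real.volume_Ioc, ENNReal.toReal_ofReal ht.le, ht.le]
  rw [e1, e2] at H
  have hA : 0 ≤ ∫ x, f x ^ 2 ∂μ := integral_nonneg fun x => sq_nonneg _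
  have hint : ∫ x in (0:ℝ)..t, f x ^ 2 = ∫ x, f x ^ 2 ∂μ := by
    rw [intervalIntegral.integral_of_le ht.le]
  have habs : |∫ x in (0:ℝ)..t, f x| ≤ ∫ x in (0:ℝ)..t, |f x| :=
    intervalIntegral.abs_integral_le_integral_abs ht.le
  have habs2 : ∫ x in (0:ℝ)..t, |f x| = ∫ x, |f x| ∂μ := by
    rw [intervalIntegral.integral_of_le ht.le]
  have hR : ((∫ x, f x ^ 2 ∂μ) ^ ((1:ℝ)/2) * t ^ ((1:ℝ)/2)) ^ 2 = (∫ x, f x ^ 2 ∂μ) * t := by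
    rw [← Real.sqrt_eq_rpow, ← Real.sqrt_eq_rpow, mul_pow, Real.sq_sqrt hA, Real.sq_sqrt ht.le]
  have h0 : 0 ≤ ∫ x, |f x| ∂μ := integral_nonneg fun x => abs_nonneg _
  calc (∫ x in (0:ℝ)..t, f x) ^ 2 = |∫ x in (0:ℝ)..t, f x| ^ 2 := (sq_abs _).symm
    _ ≤ (∫ x, |f x| ∂μ) ^ 2 := by
        rw [← habs2]; exact pow_le_pow_left₀ (abs_nonneg _) habs 2
    _ ≤ ((∫ x, f x ^ 2 ∂μ) ^ ((1:ℝ)/2) * t ^ ((1:ℝ)/2)) ^ 2 := pow_le_pow_left₀ h0 H 2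
    _ = t * ∫ x in (0:ℝ)..t, f x ^ 2 := by rw [hR, hint, mul_comm]


/-- Lawrentiev gap for the Mania functional: every absolutely continuous
`u : [0,1] → ℝ` with `u(0) = 0`, `u(1) = 1` and finite kinetic energy
`T[u] = ∫₀¹ u'² < ∞` satisfies `J[u] = ∫₀¹ (x − u³)² u'⁶ dx ≥ ½ (7/8)² (3/10)⁵`;
in particular `J + ε²T ≥ ½ (7/8)² (3/10)⁵` for every `ε > 0`. -/
theorem mania_lawrentiev_gap (u u' : ℝ → ℝ)
    (hrep : ∀ x ∈ Set.Icc (0 : ℝ) 1, u x = ∫ t in (0 : ℝ)..x, u' t)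
    (hu'int : IntervalIntegrable u' volume 0 1)
    (hbc : u 1 = 1)
    (hT : IntervalIntegrable (fun t => u' t ^ 2) volume 0 1) :
    (ENNReal.ofReal ((1 / 2 : ℝ) * (7 / 8) ^ 2 * (3 / 10) ^ 5) ≤
      ∫⁻ x in Set.Ioc (0 : ℝ) 1, ENNReal.ofReal ((x - u x ^ 3) ^ 2 * u' x ^ 6)) ∧
    ∀ ε : ℝ, 0 < ε →
      ENNReal.ofReal ((1 / 2 : ℝ) * (7 / 8) ^ 2 * (3 / 10) ^ 5) ≤
        (∫⁻ x in Set.Ioc (0 : ℝ) 1, ENNReal.ofReal ((x - u x ^ 3) ^ 2 * u' x ^ 6)) +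
          ENNReal.ofReal (ε ^ 2 * ∫ t in (0 : ℝ)..1, u' t ^ 2) := by
  set J := ∫⁻ x in Set.Ioc (0:ℝ) 1, ENNReal.ofReal ((x - u x ^ 3) ^ 2 * u' x ^ 6) with hJdef
  suffices key : ENNReal.ofReal ((1 / 2 : ℝ) * (7 / 8) ^ 2 * (3 / 10) ^ 5) ≤ J by
    exact ⟨key, fun ε _ => le_add_right key⟩
  -- continuity of u on [0,1]
  have hIcc : Set.uIcc (0:ℝ) 1 = Set.Icc 0 1 := Set.uIcc_of_le zero_le_one
  have hcont : ContinuousOn u (Set.Icc 0 1) := by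
    have h1 : ContinuousOn (fun x => ∫ t in (0:ℝ)..x, u' t) (Set.uIcc 0 1) :=
      intervalIntegral.continuousOn_primitive_interval' hu'int Set.left_mem_uIcc
    rw [hIcc] at h1
    exact h1.congr hrep
  have hu0 : u 0 = 0 := by simpa using hrep 0 (by norm_num)
  set T : ℝ := ∫ t in (0:ℝ)..1, u' t ^ 2 with hTdef
  have hT0 : 0 ≤ T := intervalIntegral.integral_nonneg zero_le_one fun x _ => sq_nonneg _
  -- Cauchy-Schwarz bound
  have hCS : ∀ t ∈ Set.Icc (0:ℝ) 1, (u t) ^ 2 ≤ t * T := by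
    intro t ht
    obtain ⟨ht0, ht1⟩ := ht
    rcases eq_or_lt_of_le ht0 with h | h
    · rw [← h, hu0]; norm_num
    have hsub : Set.uIcc (0:ℝ) t ⊆ Set.uIcc (0:ℝ) 1 := by
      rw [hIcc, Set.uIcc_of_le ht0]
      exact Set.Icc_subset_Icc le_rfl ht1
    have hfi : IntervalIntegrable u' volume 0 t := hu'int.mono_set hsub
    have h2i : IntervalIntegrable (fun x => u' x ^ 2) volume 0 t := hT.mono_set hsub
    have hcs := mania_cs_aux h hfi h2i
    rw [← hrep t ⟨ht0, ht1⟩] at hcs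
    have hmono : ∫ x in (0:ℝ)..t, u' x ^ 2 ≤ T := by
      rw [hTdef]
      exact intervalIntegral.integral_mono_interval le_rfl ht0 ht1
        (ae_of_all _ fun x => sq_nonneg _) hT
    calc u t ^ 2 ≤ t * ∫ x in (0:ℝ)..t, u' x ^ 2 := hcs
      _ ≤ t * T := by nlinarith
  clear_value T
  clear hTdef
  -- the barrier function
  set g : ℝ → ℝ := fun t => u t ^ 3 - t / 8 with hgdef
  have hgcont : ContinuousOn g (Set.Icc 0 1) := by
    apply ContinuousOn.sub (hcont.pow 3)
    exact (continuous_id.div_const 8).continuousOn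
  set T' : ℝ := T + 1 with hT'def
  have hT'pos : 0 < T' := by rw [hT'def]; linarith
  have hT'T : T ≤ T' := by rw [hT'def]; linarith
  clear_value T'
  clear hT'def
  set x₀ : ℝ := min 1 (1/(64 * T' ^ 3)) with hx₀def
  have hx₀pos : 0 < x₀ := by
    apply lt_min one_pos
    exact div_pos one_pos (mul_pos (by norm_num) (pow_pos hT'pos 3))
  have hx₀le1 : x₀ ≤ 1 := min_le_left _ _
  have hx₀le2 : x₀ ≤ 1/(64 * T' ^ 3) := min_le_right _ _
  clear_value x₀
  clear hx₀def
  have hS0 : ∀ t, 0 ≤ t → t ≤ x₀ → g t ≤ 0 := by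
    intro t ht0 htx
    have ht1 : t ≤ 1 := htx.trans hx₀le1
    simp only [hgdef]
    rcases le_or_gt (u t) 0 with h | h
    · have h3 : u t ^ 3 ≤ 0 := Odd.pow_nonpos (by decide) h
      linarith
    · have h2 : u t ^ 2 ≤ t * T := hCS t ⟨ht0, ht1⟩
      have h2' : u t ^ 2 ≤ t * T' := by nlinarith
      have htT : t * T' ^ 3 ≤ 1 / 64 := by
        have h' : t ≤ 1/(64 * T' ^ 3) := htx.trans hx₀le2
        rw [le_div_iff₀ (mul_pos (by norm_num) (pow_pos hT'pos 3))] at h'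
        nlinarith
      have cube : (u t ^ 2) ^ 3 ≤ (t * T') ^ 3 :=
        pow_le_pow_left₀ (sq_nonneg _) h2' 3
      have final : t^2 * (t * T'^3) ≤ t^2 * (1/64) :=
        mul_le_mul_of_nonneg_left htT (sq_nonneg t)
      have hsq : (u t ^ 3) ^ 2 ≤ (t/8) ^ 2 := by nlinarith [cube, final]
      nlinarith [pow_pos h 3, hsq, ht0]
  clear_value g
  -- the set S and its supremum b
  set S : Set ℝ := {x | x ∈ Set.Icc (0:ℝ) 1 ∧ ∀ t, 0 ≤ t → t ≤ x → g t ≤ 0} with hSdef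
  have hx₀S : x₀ ∈ S := ⟨⟨hx₀pos.le, hx₀le1⟩, hS0⟩
  have hSbdd : BddAbove S := ⟨1, fun x hx => hx.1.2⟩
  have hSne : S.Nonempty := ⟨x₀, hx₀S⟩
  set b : ℝ := sSup S with hbdef
  have hbx₀ : x₀ ≤ b := le_csSup hSbdd hx₀S
  have hb0 : 0 < b := lt_of_lt_of_le hx₀pos hbx₀
  have hb1 : b ≤ 1 := csSup_le hSne fun x hx => hx.1.2
  have hblt : ∀ t, 0 ≤ t → t < b → g t ≤ 0 := by
    intro t ht0 htb
    obtain ⟨s, hsS, hts⟩ := exists_lt_of_lt_csSup hSne htb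
    exact hsS.2 t ht0 hts.le
  have hgb : g b ≤ 0 := by
    have hmem : b ∈ closure (Set.Ico 0 b) := by
      rw [closure_Ico hb0.ne]
      exact ⟨hb0.le, le_rfl⟩
    haveI hne : (𝓝[Set.Ico 0 b] b).NeBot := mem_closure_iff_nhdsWithin_neBot.mp hmem
    have htend : Filter.Tendsto g (𝓝[Set.Ico 0 b] b) (𝓝 (g b)) := by
      apply (hgcont.continuousWithinAt ⟨hb0.le, hb1⟩).mono_left
      apply nhdsWithin_mono
      intro x hx
      exact ⟨hx.1, hx.2.le.trans hb1⟩
    exact le_of_tendsto htend (Filter.eventually_of_mem self_mem_nhdsWithin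
      fun t ht => hblt t ht.1 ht.2)
  have hgle : ∀ t, 0 ≤ t → t ≤ b → g t ≤ 0 := by
    intro t ht0 htb
    rcases eq_or_lt_of_le htb with h | h
    · rwa [h]
    · exact hblt t ht0 h
  have hgb' : g b = 0 := by
    by_contra hnz
    have hlt : g b < 0 := lt_of_le_of_ne hgb hnz
    have hb1' : b < 1 := by
      rcases eq_or_lt_of_le hb1 with h | h
      · exfalso
        have hg1 : g 1 = 1 - 1/8 := by simp [hgdef, hbc]
        rw [h, hg1] at hgb
        norm_num at hgb
      · exact h
    have hcw : ContinuousWithinAt g (Set.Icc 0 1) b := hgcont.continuousWithinAt ⟨hb0.le, hb1⟩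
    have hpre : g ⁻¹' (Set.Iio 0) ∈ 𝓝[Set.Icc 0 1] b := hcw (Iio_mem_nhds hlt)
    obtain ⟨U, hUopen, hbU, hUsub⟩ := mem_nhdsWithin.mp hpre
    obtain ⟨δ, hδpos, hball⟩ := Metric.isOpen_iff.mp hUopen b hbU
    have hbs : b < min 1 (b + δ/2) := by
      apply lt_min hb1'
      linarith
    have hsS : min 1 (b + δ/2) ∈ S := by
      refine ⟨⟨hb0.le.trans hbs.le, min_le_left _ _⟩, ?_⟩
      intro t ht0 hts
      rcases le_or_gt t b with h | h
      · exact hgle t ht0 h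
      · have ht1 : t ≤ 1 := hts.trans (min_le_left _ _)
        have htball : t ∈ Metric.ball b δ := by
          rw [Metric.mem_ball, Real.dist_eq, abs_of_pos (by linarith)]
          have : t ≤ b + δ/2 := hts.trans (min_le_right _ _)
          linarith
        have : t ∈ g ⁻¹' (Set.Iio 0) := hUsub ⟨hball htball, ⟨ht0, ht1⟩⟩
        exact le_of_lt this
    have : min 1 (b + δ/2) ≤ b := le_csSup hSbdd hsS
    linarith
  clear_value b
  have hub3 : u b ^ 3 = b / 8 := by
    have h0 : u b ^ 3 - b / 8 = 0 := by
      have := hgb'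
      rw [hgdef] at this
      exact this
    linarith
  have hubpos : 0 < u b := by
    by_contra h
    push_neg at h
    have h3 : u b ^ 3 ≤ 0 := Odd.pow_nonpos (by decide) h
    rw [hub3] at h3
    linarith
  have hub6 : u b ^ 6 = b ^ 2 / 64 := by nlinarith [hub3]
  have hglecond : ∀ x, 0 ≤ x → x ≤ b → u x ^ 3 ≤ x / 8 := by
    intro x hx0 hxb
    have := hgle x hx0 hxb
    rw [hgdef] at this
    linarith
  clear hgdef hgcont hgb hgb' hblt hgle hS0 hSdef hx₀S hSbdd hSne hbdef hbx₀ hx₀pos hx₀le1 hx₀le2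
  clear_value J
  -- main Hölder estimate
  set R : ℝ≥0∞ := (ENNReal.ofReal (64/49) * J) ^ ((1:ℝ)/6) *
      (ENNReal.ofReal ((5/3) * b ^ ((3:ℝ)/5))) ^ (1/((6:ℝ)/5)) with hRdef
  have Hmain : ∀ a ∈ Set.Ioo (0:ℝ) b, ENNReal.ofReal (u b - u a) ≤ R := by
    intro a ha
    obtain ⟨ha0, hab⟩ := ha
    have hab' : a ≤ b := hab.le
    have hsub : Set.uIcc a b ⊆ Set.uIcc (0:ℝ) 1 := by
      rw [hIcc, Set.uIcc_of_le hab']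
      exact Set.Icc_subset_Icc ha0.le hb1
    have hu'ab : IntegrableOn u' (Set.Ioc a b) := (hu'int.mono_set hsub).1
    have hmeasu' : AEMeasurable u' (volume.restrict (Set.Ioc a b)) :=
      hu'ab.aestronglyMeasurable.aemeasurable
    set f : ℝ → ℝ≥0∞ := fun x => ENNReal.ofReal (x ^ ((1:ℝ)/3) * |u' x|) with hfdef
    set gE : ℝ → ℝ≥0∞ := fun x => ENNReal.ofReal (x ^ (-(1:ℝ)/3)) with hgEdef
    have hmf : AEMeasurable f (volume.restrict (Set.Ioc a b)) := by
      apply ENNReal.measurable_ofReal.comp_aemeasurable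
      exact (measurable_id.pow measurable_const).aemeasurable.mul (continuous_abs.measurable.comp_aemeasurable hmeasu')
    have hmg : AEMeasurable gE (volume.restrict (Set.Ioc a b)) :=
      (ENNReal.measurable_ofReal.comp (measurable_id.pow measurable_const)).aemeasurable
    have hpq : Real.HolderConjugate 6 (6/5) := Real.holderConjugate_iff.mpr ⟨by norm_num, by norm_num⟩
    have H := ENNReal.lintegral_mul_le_Lp_mul_Lq (volume.restrict (Set.Ioc a b)) hpq hmf hmg
    have hL : ∫⁻ x in Set.Ioc a b, (f * gE) x = ∫⁻ x in Set.Ioc a b, ENNReal.ofReal |u' x| := by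
      refine setLIntegral_congr_fun measurableSet_Ioc (fun x hx => ?_)
      have hx0 : 0 < x := ha0.trans hx.1
      simp only [hfdef, hgEdef, Pi.mul_apply]
      rw [← ENNReal.ofReal_mul (by positivity)]
      congr 1
      have hxx : x ^ ((1:ℝ)/3) * x ^ (-(1:ℝ)/3) = 1 := by
        rw [← Real.rpow_add hx0]; norm_num
      calc x ^ ((1:ℝ)/3) * |u' x| * x ^ (-(1:ℝ)/3)
          = (x ^ ((1:ℝ)/3) * x ^ (-(1:ℝ)/3)) * |u' x| := by ring
        _ = |u' x| := by rw [hxx, one_mul]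
    have hL2 : ENNReal.ofReal (u b - u a) ≤ ∫⁻ x in Set.Ioc a b, ENNReal.ofReal |u' x| := by
      have habs : IntegrableOn (fun x => |u' x|) (Set.Ioc a b) := hu'ab.abs
      rw [← ofReal_integral_eq_lintegral_ofReal habs (ae_of_all _ fun x => abs_nonneg _)]
      apply ENNReal.ofReal_le_ofReal
      have hi0b : IntervalIntegrable u' volume 0 b := hu'int.mono_set (by
        rw [hIcc, Set.uIcc_of_le hb0.le]
        exact Set.Icc_subset_Icc le_rfl hb1)
      have hi0a : IntervalIntegrable u' volume 0 a := hu'int.mono_set (by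
        rw [hIcc, Set.uIcc_of_le ha0.le]
        exact Set.Icc_subset_Icc le_rfl (hab'.trans hb1))
      have hdiff : u b - u a = ∫ x in a..b, u' x := by
        rw [hrep b ⟨hb0.le, hb1⟩, hrep a ⟨ha0.le, hab'.trans hb1⟩]
        exact intervalIntegral.integral_interval_sub_left hi0b hi0a
      rw [hdiff, intervalIntegral.integral_of_le hab']
      exact integral_mono hu'ab habs fun x => le_abs_self _
    have hfp : ∫⁻ x in Set.Ioc a b, f x ^ (6:ℝ) =
        ∫⁻ x in Set.Ioc a b, ENNReal.ofReal (x^2 * u' x ^ 6) := by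
      refine setLIntegral_congr_fun measurableSet_Ioc (fun x hx => ?_)
      have hx0 : 0 < x := ha0.trans hx.1
      simp only [hfdef]
      rw [ENNReal.ofReal_rpow_of_nonneg (by positivity) (by norm_num)]
      congr 1
      have e1 : (x ^ ((1:ℝ)/3)) ^ (6:ℝ) = x ^ (2:ℝ) := by
        rw [← Real.rpow_mul hx0.le]; norm_num
      have e2 : |u' x| ^ (6:ℝ) = u' x ^ 6 := by
        have h1 : |u' x| ^ (6:ℝ) = |u' x| ^ (6:ℕ) := by
          exact Real.rpow_ofNat _ 6
        rw [h1, pow_abs, abs_of_nonneg (by positivity)]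
      rw [Real.mul_rpow (Real.rpow_nonneg hx0.le _) (abs_nonneg _), e1, e2, Real.rpow_two]
    have hgp : ∫⁻ x in Set.Ioc a b, gE x ^ ((6:ℝ)/5) ≤
        ENNReal.ofReal ((5/3) * b ^ ((3:ℝ)/5)) := by
      have heq : ∫⁻ x in Set.Ioc a b, gE x ^ ((6:ℝ)/5) =
          ∫⁻ x in Set.Ioc a b, ENNReal.ofReal (x ^ (-(2:ℝ)/5)) := by
        refine setLIntegral_congr_fun measurableSet_Ioc (fun x hx => ?_)
        have hx0 : 0 < x := ha0.trans hx.1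
        simp only [hgEdef]
        rw [ENNReal.ofReal_rpow_of_nonneg (Real.rpow_nonneg hx0.le _) (by norm_num),
          ← Real.rpow_mul hx0.le]
        norm_num
      rw [heq]
      have hint : IntegrableOn (fun x => x ^ (-(2:ℝ)/5)) (Set.Ioc a b) :=
        (intervalIntegral.intervalIntegrable_rpow' (by norm_num)).1
      rw [← ofReal_integral_eq_lintegral_ofReal hint
        ((ae_restrict_iff' measurableSet_Ioc).2 (ae_of_all _
          fun x hx => Real.rpow_nonneg (ha0.trans hx.1).le _))]
      apply ENNReal.ofReal_le_ofReal
      have hconv : ∫ x in Set.Ioc a b, x ^ (-(2:ℝ)/5) = ∫ x in a..b, x ^ (-(2:ℝ)/5) :=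
        (intervalIntegral.integral_of_le hab').symm
      rw [hconv, integral_rpow (Or.inl (by norm_num))]
      rw [show (-(2:ℝ)/5 + 1) = (3:ℝ)/5 from by norm_num]
      have h35 : 0 ≤ a ^ ((3:ℝ)/5) := Real.rpow_nonneg ha0.le _
      linarith [h35]
    have hXle : ∫⁻ x in Set.Ioc a b, ENNReal.ofReal (x^2 * u' x ^ 6) ≤
        ENNReal.ofReal (64/49) * J := by
      have step1 : ∫⁻ x in Set.Ioc a b, ENNReal.ofReal (x^2 * u' x ^6) ≤
          ∫⁻ x in Set.Ioc a b, ENNReal.ofReal (64/49 * ((x - u x ^3)^2 * u' x ^6)) := by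
        apply lintegral_mono_ae
        refine (ae_restrict_iff' measurableSet_Ioc).2 (ae_of_all _ fun x hx => ?_)
        apply ENNReal.ofReal_le_ofReal
        have hx0 : 0 < x := ha0.trans hx.1
        have hcond : u x ^ 3 ≤ x / 8 := hglecond x hx0.le hx.2
        have h78 : (7/8) * x ≤ x - u x ^ 3 := by linarith
        have hxsq : x^2 ≤ (64/49) * (x - u x ^3)^2 := by
          nlinarith [mul_self_le_mul_self (by positivity : (0:ℝ) ≤ 7/8*x) h78]
        calc x^2 * u' x ^6 ≤ ((64/49) * (x - u x ^3)^2) * u' x ^6 :=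
              mul_le_mul_of_nonneg_right hxsq (by positivity)
          _ = 64/49 * ((x - u x ^3)^2 * u' x ^6) := by ring
      have step2 : ∫⁻ x in Set.Ioc a b, ENNReal.ofReal (64/49 * ((x - u x ^3)^2 * u' x ^6)) ≤
          ∫⁻ x in Set.Ioc (0:ℝ) 1, ENNReal.ofReal (64/49 * ((x - u x ^3)^2 * u' x ^6)) :=
        lintegral_mono_set (Set.Ioc_subset_Ioc ha0.le hb1)
      have step3 : ∫⁻ x in Set.Ioc (0:ℝ) 1,
          ENNReal.ofReal (64/49 * ((x - u x ^3)^2 * u' x ^6)) = ENNReal.ofReal (64/49) * J := by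
        rw [hJdef, ← lintegral_const_mul' _ _ ENNReal.ofReal_ne_top]
        refine lintegral_congr fun x => ?_
        rw [← ENNReal.ofReal_mul (by norm_num)]
      exact step1.trans (step2.trans step3.le)
    calc ENNReal.ofReal (u b - u a) ≤ ∫⁻ x in Set.Ioc a b, ENNReal.ofReal |u' x| := hL2
      _ = ∫⁻ x in Set.Ioc a b, (f * gE) x := hL.symm
      _ ≤ (∫⁻ x in Set.Ioc a b, f x ^ (6:ℝ)) ^ ((1:ℝ)/6) *
          (∫⁻ x in Set.Ioc a b, gE x ^ ((6:ℝ)/5)) ^ (1/((6:ℝ)/5)) := by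
          convert H using 3 <;> norm_num
      _ ≤ R := by
          rw [hRdef]
          refine mul_le_mul' (ENNReal.rpow_le_rpow ?_ (by norm_num))
            (ENNReal.rpow_le_rpow hgp (by norm_num))
          rw [hfp]; exact hXle
  clear_value R
  -- limit a → 0
  have hRlim : ENNReal.ofReal (u b) ≤ R := by
    haveI hne : (𝓝[Set.Ioo 0 b] (0:ℝ)).NeBot := by
      apply mem_closure_iff_nhdsWithin_neBot.mp
      rw [closure_Ioo hb0.ne]
      exact ⟨le_rfl, hb0.le⟩
    have h1 : Filter.Tendsto u (𝓝[Set.Ioo 0 b] 0) (𝓝 0) := by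
      have hc : ContinuousWithinAt u (Set.Icc 0 1) 0 :=
        hcont.continuousWithinAt ⟨le_rfl, zero_le_one⟩
      rw [ContinuousWithinAt, hu0] at hc
      apply hc.mono_left
      apply nhdsWithin_mono
      intro x hx
      exact ⟨hx.1.le, hx.2.le.trans hb1⟩
    have htend : Filter.Tendsto (fun a => ENNReal.ofReal (u b - u a)) (𝓝[Set.Ioo 0 b] 0)
        (𝓝 (ENNReal.ofReal (u b))) := by
      have h2 : Filter.Tendsto (fun a => u b - u a) (𝓝[Set.Ioo 0 b] 0) (𝓝 (u b - 0)) :=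
        Filter.Tendsto.sub tendsto_const_nhds h1
      rw [sub_zero] at h2
      exact (ENNReal.continuous_ofReal.tendsto _).comp h2
    exact le_of_tendsto htend (Filter.eventually_of_mem self_mem_nhdsWithin
      fun a ha => Hmain a ha)
  -- raise to the sixth power
  have h6 : ENNReal.ofReal (b^2/64) ≤
      ENNReal.ofReal (64/49 * ((5/3)^5 * b^3)) * J := by
    have hstep : ENNReal.ofReal (u b) ^ (6:ℝ) ≤ R ^ (6:ℝ) :=
      ENNReal.rpow_le_rpow hRlim (by norm_num)
    have hL : ENNReal.ofReal (u b) ^ (6:ℝ) = ENNReal.ofReal (b^2/64) := by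
      rw [ENNReal.ofReal_rpow_of_nonneg hubpos.le (by norm_num)]
      congr 1
      rw [Real.rpow_ofNat]
      exact hub6
    have hR6 : R ^ (6:ℝ) = (ENNReal.ofReal (64/49) * J) *
        (ENNReal.ofReal ((5/3) * b ^ ((3:ℝ)/5))) ^ (5:ℝ) := by
      rw [hRdef, ENNReal.mul_rpow_of_nonneg _ _ (by norm_num : (0:ℝ) ≤ 6),
        ← ENNReal.rpow_mul, ← ENNReal.rpow_mul]
      norm_num
    have hY : (ENNReal.ofReal ((5/3) * b ^ ((3:ℝ)/5))) ^ (5:ℝ) =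
        ENNReal.ofReal ((5/3)^5 * b^3) := by
      rw [ENNReal.ofReal_rpow_of_nonneg
        (mul_nonneg (by norm_num) (Real.rpow_nonneg hb0.le _)) (by norm_num)]
      congr 1
      rw [Real.mul_rpow (by norm_num) (Real.rpow_nonneg hb0.le _), ← Real.rpow_mul hb0.le]
      rw [show (3:ℝ)/5*5 = 3 by norm_num, Real.rpow_ofNat, Real.rpow_ofNat]
    calc ENNReal.ofReal (b^2/64) = ENNReal.ofReal (u b) ^ (6:ℝ) := hL.symm
      _ ≤ R ^ (6:ℝ) := hstep
      _ = ENNReal.ofReal (64/49) * J * ENNReal.ofReal ((5/3)^5 * b^3) := by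
          rw [hR6, hY]
      _ = ENNReal.ofReal (64/49 * ((5/3)^5 * b^3)) * J := by
          rw [show ENNReal.ofReal (64/49 * ((5/3)^5 * b^3)) =
              ENNReal.ofReal (64/49) * ENNReal.ofReal ((5/3)^5 * b^3) from
            ENNReal.ofReal_mul (by norm_num)]
          ring
  -- conclude
  have hCpos : (0:ℝ) < 64/49 * ((5/3)^5 * b^3) := by positivity
  refine (ENNReal.mul_le_mul_iff_right (a := ENNReal.ofReal (64/49 * ((5/3)^5 * b^3)))
    (ne_of_gt (ENNReal.ofReal_pos.mpr hCpos)) ENNReal.ofReal_ne_top).mp ?_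
  calc ENNReal.ofReal (64/49 * ((5/3)^5 * b^3)) *
        ENNReal.ofReal ((1 / 2 : ℝ) * (7 / 8) ^ 2 * (3 / 10) ^ 5)
      = ENNReal.ofReal ((64/49 * ((5/3)^5 * b^3)) *
          ((1 / 2 : ℝ) * (7 / 8) ^ 2 * (3 / 10) ^ 5)) := by
        rw [ENNReal.ofReal_mul hCpos.le]
    _ ≤ ENNReal.ofReal (b^2/64) := by
        apply ENNReal.ofReal_le_ofReal
        nlinarith [hb0, hb1, pow_pos hb0 2, pow_pos hb0 3]
    _ ≤ ENNReal.ofReal (64/49 * ((5/3)^5 * b^3)) * J := h6
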